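/- Fix D ∈ {3,4,6}, nonnegative integers i ≤ n, and a prime p with p ≡ −1 (mod D), √(2Dn) < p ≤ n. Let k be an integer with i ≤ k ≤ n and p ∣ Dk+1. If neither C(k+i,i) nor C(n−i,k−i) is divisible by p, then either {(n+1−1/D)/p} < 1/D or {(n+1/D)/p} ≥ 1 − 1/D. -/

import Mathlib

lemma kummer_aux {p N m : ℕ} (hp : p.Prime) (h : N % p < m % p) : p ∣ N.choose m := by
  haveI : Fact p.Prime := ⟨hp⟩
  have hl := (Choose.choose_modEq_choose_mod_mul_choose_div_nat (n := N) (k := m) (p := p))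
  have h0 : (N % p).choose (m % p) = 0 := Nat.choose_eq_zero_of_lt h
  rw [h0, zero_mul] at hl
  simpa [Nat.modEq_zero_iff_dvd] using hl

set_option maxRecDepth 8000 in
theorem stmt12 (D i n k p : ℕ) (hD : D = 3 ∨ D = 4 ∨ D = 6) (hin : i ≤ n)
    (hp : p.Prime) (hmod : (p : ZMod D) = -1)
    (hlow : Real.sqrt (2 * D * n) < p) (hup : p ≤ n)
    (hik : i ≤ k) (hkn : k ≤ n) (hdvd : p ∣ D * k + 1)
    (h1 : ¬ p ∣ (k + i).choose i) (h2 : ¬ p ∣ (n - i).choose (k - i)) :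
    Int.fract (((n : ℝ) + 1 - 1 / D) / p) < 1 / D ∨
      1 - 1 / D ≤ Int.fract (((n : ℝ) + 1 / D) / p) := by
  have hD3 : 3 ≤ D := by omega
  have hD6 : D ≤ 6 := by omega
  have hppos : 0 < p := hp.pos
  -- D ∣ p + 1
  have hDdvd : D ∣ p + 1 := by
    have : ((p + 1 : ℕ) : ZMod D) = 0 := by push_cast [hmod]; ring
    exact (ZMod.natCast_eq_zero_iff _ _).mp this
  obtain ⟨t, hDt⟩ := hDdvd
  -- p > 2D
  have hsq : 2 * D * n < p ^ 2 := by
    have h0 : (0:ℝ) ≤ 2 * D * n := by positivity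
    have : (2 * D * n : ℝ) < (p:ℝ) ^ 2 := by
      nlinarith [Real.sq_sqrt h0, Real.sqrt_nonneg (2 * D * n : ℝ)]
    exact_mod_cast this
  have hp2D : 2 * D < p := by
    have h1' : 2 * D * p ≤ 2 * D * n := Nat.mul_le_mul_left _ hup
    have : 2 * D * p < p * p := by
      calc 2 * D * p ≤ 2 * D * n := h1'
        _ < p ^ 2 := hsq
        _ = p * p := sq p
    exact Nat.lt_of_mul_lt_mul_right this
  have h3t : 3 * t ≤ D * t := Nat.mul_le_mul_right _ hD3
  have h6t : D * t ≤ 6 * t := Nat.mul_le_mul_right _ hD6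
  have htp : t ≤ p := by omega
  have ht2 : 2 ≤ t := by omega
  -- k % p = p - t
  have hkmod : k % p = p - t := by
    haveI : Fact p.Prime := ⟨hp⟩
    have e : p - t + t = p := by omega
    have e1 : D * (p - t) + D * t = D * p := by rw [← Nat.mul_add, e]
    have e2 : (D - 1) * p + 1 * p = (D - 1 + 1) * p := (Nat.add_mul _ _ _).symm
    have eD : D - 1 + 1 = D := by omega
    rw [eD] at e2
    have hc : D * (p - t) + 1 = (D - 1) * p := by omega
    have hdvd2 : p ∣ D * (p - t) + 1 := hc ▸ ⟨D - 1, mul_comm _ _⟩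
    have z1 : ((D * k + 1 : ℕ) : ZMod p) = 0 := (ZMod.natCast_eq_zero_iff _ _).mpr hdvd
    have z2 : ((D * (p - t) + 1 : ℕ) : ZMod p) = 0 :=
      (ZMod.natCast_eq_zero_iff _ _).mpr hdvd2
    push_cast at z1 z2
    have hDne : (D : ZMod p) ≠ 0 := by
      rw [Ne, ZMod.natCast_eq_zero_iff]
      intro h
      have := Nat.le_of_dvd (by omega) h
      omega
    have hkc : ((k : ℕ) : ZMod p) = (((p - t) : ℕ) : ZMod p) := by
      apply mul_left_cancel₀ hDne
      linear_combination z1 - z2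
    have hmm := (ZMod.natCast_eq_natCast_iff' _ _ _).mp hkc
    rwa [Nat.mod_eq_of_lt (show p - t < p by omega)] at hmm
  -- Kummer consequences
  have hB : i % p ≤ (k + i) % p := by
    by_contra h
    exact h1 (kummer_aux hp (by omega))
  have hC : (k - i) % p ≤ (n - i) % p := by
    by_contra h
    exact h2 (kummer_aux hp (by omega))
  have hipl : i % p < p := Nat.mod_lt _ hppos
  have hkpl : k % p < p := Nat.mod_lt _ hppos
  have hnkl : (n - k) % p < p := Nat.mod_lt _ hppos
  have hBs : i % p + k % p < p := by
    by_contra h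
    push_neg at h
    have e : (k + i) % p = k % p + i % p - p := by
      conv_lhs => rw [Nat.add_mod]
      rw [Nat.mod_eq_sub_mod (by omega), Nat.mod_eq_of_lt (by omega)]
    omega
  -- (k - i) % p = k % p - i % p
  have hsk : i % p ≤ k % p := by omega
  have hki : (k - i) % p = k % p - i % p := by
    have hme : (k - i) + i ≡ (k % p - i % p) + i [MOD p] := by
      calc (k - i) + i = k := by omega
        _ ≡ k % p [MOD p] := (Nat.mod_modEq k p).symm
        _ = (k % p - i % p) + i % p := by omega
        _ ≡ (k % p - i % p) + i [MOD p] := Nat.ModEq.add_left _ (Nat.mod_modEq i p)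
    have := (Nat.ModEq.add_right_cancel' i hme)
    have h2' : (k - i) % p = (k % p - i % p) % p := this
    rw [h2', Nat.mod_eq_of_lt (by omega)]
  have hCs : (k - i) % p + (n - k) % p < p := by
    by_contra h
    push_neg at h
    have e : (n - i) % p = (k - i) % p + (n - k) % p - p := by
      conv_lhs => rw [show n - i = (k - i) + (n - k) by omega, Nat.add_mod]
      rw [Nat.mod_eq_sub_mod (by omega), Nat.mod_eq_of_lt (by omega)]
    have hkil : (k - i) % p < p := Nat.mod_lt _ hppos
    omega
  -- n % p
  have hnmod : n % p = ((n - k) % p + k % p) % p := by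
    conv_lhs => rw [show n = (n - k) + k by omega, Nat.add_mod]
  -- main nat dichotomy
  have hmain : n % p + 2 ≤ t ∨ p ≤ n % p + t := by
    rcases lt_or_ge ((n - k) % p + k % p) p with hcase | hcase
    · right
      rw [hnmod, Nat.mod_eq_of_lt hcase]
      omega
    · left
      rw [hnmod, Nat.mod_eq_sub_mod hcase, Nat.mod_eq_of_lt (by omega)]
      omega
  -- real part
  set r := n % p with hr
  set q := n / p with hq
  have hrp : r < p := Nat.mod_lt _ hppos
  have hnpq : (n : ℝ) = p * q + r := by exact_mod_cast (Nat.div_add_mod n p).symm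
  have hp0 : (0:ℝ) < p := by exact_mod_cast hppos
  have hD0 : (0:ℝ) < D := by positivity
  have hDr : (3:ℝ) ≤ D := by exact_mod_cast hD3
  have hprD : (p : ℝ) + 1 = D * t := by exact_mod_cast hDt
  have hrpr : (r : ℝ) ≤ p - 1 := by
    have : r + 1 ≤ p := hrp
    have := (Nat.cast_le (α := ℝ)).mpr this
    push_cast at this
    linarith
  rcases hmain with hcase | hcase
  · left
    have hfr : Int.fract (((n : ℝ) + 1 - 1 / D) / p) = ((r : ℝ) + 1 - 1 / D) / p := by
      have he : ((n : ℝ) + 1 - 1 / D) / p = ((q : ℤ) : ℝ) + ((r : ℝ) + 1 - 1 / D) / p := by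
        rw [hnpq, show (p:ℝ) * q + r + 1 - 1 / D = p * q + ((r:ℝ) + 1 - 1 / D) by ring,
          add_div, mul_div_cancel_left₀ _ (ne_of_gt hp0)]
        norm_num
      rw [he, Int.fract_intCast_add, Int.fract_eq_self.mpr]
      have h1d : 1 / (D:ℝ) ≤ 1 := by rw [div_le_one hD0]; linarith
      have hr0 : (0:ℝ) ≤ r := Nat.cast_nonneg r
      constructor
      · apply div_nonneg _ (le_of_lt hp0)
        linarith
      · rw [div_lt_one hp0]
        have : 1 / (D:ℝ) > 0 := by positivity
        linarith
    rw [hfr, div_lt_div_iff₀ hp0 hD0]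
    -- goal : (r + 1 - 1/D) * D < 1 * p
    have hexp : ((r:ℝ) + 1 - 1 / D) * D = r * D + D - 1 := by
      field_simp
    rw [hexp, one_mul]
    -- nat fact : D * r + D < p
    have hnat : D * r + D < p := by
      have h1' : D * (r + 1) ≤ D * (t - 1) := Nat.mul_le_mul_left _ (by omega)
      have h2' : D * (t - 1) + D = D * t := by
        rw [← Nat.mul_succ]
        congr 1
        omega
      have h3' : D * (r + 1) = D * r + D := by ring
      omega
    have : ((D * r + D : ℕ) : ℝ) < p := by exact_mod_cast hnat
    push_cast at this
    linarith
  · right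
    have hfr : Int.fract (((n : ℝ) + 1 / D) / p) = ((r : ℝ) + 1 / D) / p := by
      have he : ((n : ℝ) + 1 / D) / p = ((q : ℤ) : ℝ) + ((r : ℝ) + 1 / D) / p := by
        rw [hnpq, show (p:ℝ) * q + r + 1 / D = p * q + ((r:ℝ) + 1 / D) by ring,
          add_div, mul_div_cancel_left₀ _ (ne_of_gt hp0)]
        norm_num
      rw [he, Int.fract_intCast_add, Int.fract_eq_self.mpr]
      constructor
      · positivity
      · rw [div_lt_one hp0]
        have : 1 / (D:ℝ) < 1 := by
          rw [div_lt_one hD0]; linarith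
        linarith
    rw [hfr, le_div_iff₀ hp0]
    have hexp : (1 - 1 / (D:ℝ)) * p = p - p / D := by ring
    -- nat fact : (D-1) * p ≤ D * r + 1
    have hnat : (D - 1) * p ≤ D * r + 1 := by
      have h1' : D * (p - t) ≤ D * r := Nat.mul_le_mul_left _ (by omega)
      have h2' : D * (p - t) + D * t = D * p := by rw [← Nat.mul_add]; congr 1; omega
      have e2 : (D - 1) * p + 1 * p = (D - 1 + 1) * p := (Nat.add_mul _ _ _).symm
      have eD : D - 1 + 1 = D := by omega
      rw [eD] at e2
      omega
    have hcast : (((D - 1) * p : ℕ) : ℝ) ≤ ((D * r + 1 : ℕ) : ℝ) := by exact_mod_cast hnat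
    push_cast [Nat.cast_sub (by omega : 1 ≤ D)] at hcast
    -- goal : (1 - 1/D) * p ≤ r + 1/D
    rw [← mul_le_mul_iff_of_pos_left hD0]
    have e1 : (D:ℝ) * ((1 - 1 / D) * p) = (D - 1) * p := by field_simp
    have e2 : (D:ℝ) * ((r:ℝ) + 1 / D) = D * r + 1 := by field_simp
    rw [e1, e2]
    linarith
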